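/- Let G be a group and σ a 2-cocycle on G. Then for all x, y, z ∈ G one has σ̃(x, yz) = σ̃(x, y) · σ̃(y⁻¹xy, z), where σ̃(x,y) = σ(x,y) · conj(σ(y, y⁻¹xy)). -/

import Mathlib

open scoped ComplexConjugate

/-- For a 2-cocycle `σ` on a group `G`, the associated function
`σ̃(x,y) = σ(x,y) ⬝ conj (σ(y, y⁻¹xy))` satisfies
`σ̃(x, yz) = σ̃(x, y) ⬝ σ̃(y⁻¹xy, z)` for all `x, y, z ∈ G`. -/
theorem twisted_cocycle_mul {G : Type*} [Group G] (σ : G → G → ℂ)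
    (hσ_unit : ∀ x y, ‖σ x y‖ = 1)
    (hσ_cocycle : ∀ x y z, σ x y * σ (x * y) z = σ x (y * z) * σ y z)
    (hσ_one : σ 1 1 = 1)
    (σt : G → G → ℂ)
    (hσt : ∀ x y, σt x y = σ x y * conj (σ y (y⁻¹ * x * y))) :
    ∀ x y z : G, σt x (y * z) = σt x y * σt (y⁻¹ * x * y) z := by
  have hne : ∀ u v, σ u v ≠ 0 := by
    intro u v h
    have := hσ_unit u v
    rw [h] at this; simp at this
  have hconj : ∀ u v, conj (σ u v) = (σ u v)⁻¹ := by
    intro u v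
    have h1 : Complex.normSq (σ u v) = 1 := by
      rw [← Complex.sq_norm, hσ_unit, one_pow]
    rw [Complex.inv_def, h1]; simp
  intro x y z
  simp only [hσt, hconj, mul_inv_rev, mul_assoc, inv_mul_cancel_left, mul_inv_cancel_left]
  field_simp
  have ha : y * (y⁻¹ * (x * y)) = x * y := by group
  have hb : z * (z⁻¹ * (y⁻¹ * (x * (y * z)))) = y⁻¹ * (x * y) * z := by group
  have E1 := hσ_cocycle x y z
  have E2 := hσ_cocycle y (y⁻¹ * (x * y)) z
  have E3 := hσ_cocycle y z (z⁻¹ * (y⁻¹ * (x * (y * z))))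
  rw [ha] at E2
  rw [hb] at E3
  rw [div_eq_div_iff (hne _ _) (mul_ne_zero (hne _ _) (hne _ _))]
  apply mul_left_cancel₀ (hne y z)
  linear_combination (-(σ y (y⁻¹ * (x * y)) * σ z (z⁻¹ * (y⁻¹ * (x * (y * z)))))) * E1 +
    (σ x y * σ z (z⁻¹ * (y⁻¹ * (x * (y * z))))) * E2 +
    (-(σ x y * σ (y⁻¹ * (x * y)) z)) * E3
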